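/- With S_n y = ∑_{j=0}^n ⟨y, e_j⟩ g_j, one has I - S_n* = P_n P_{n-1} ⋯ P_0 and I - S_n = P_0 P_1 ⋯ P_n, where P_k is the orthogonal projection onto the orthogonal complement of e_k. -/

import Mathlib

open scoped ComplexInnerProductSpace

/-- Orthogonal projection of `H` onto the orthogonal complement of `e k`. -/
noncomputable def projPerp {H : Type*} [NormedAddCommGroup H] [InnerProductSpace ℂ H]
    [CompleteSpace H] (e : ℕ → H) (k : ℕ) : H →L[ℂ] H :=
  (Submodule.span ℂ {e k})ᗮ.subtypeL.comp
    (Submodule.orthogonalProjection (Submodule.span ℂ {e k})ᗮ)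

/-- The product `P_n P_{n-1} ⋯ P_0`. -/
noncomputable def projProdDesc {H : Type*} [NormedAddCommGroup H] [InnerProductSpace ℂ H]
    [CompleteSpace H] (e : ℕ → H) : ℕ → H →L[ℂ] H
  | 0 => projPerp e 0
  | (n+1) => (projPerp e (n+1)).comp (projProdDesc e n)

/-- The product `P_0 P_1 ⋯ P_n`. -/
noncomputable def projProdAsc {H : Type*} [NormedAddCommGroup H] [InnerProductSpace ℂ H]
    [CompleteSpace H] (e : ℕ → H) : ℕ → H →L[ℂ] H
  | 0 => projPerp e 0
  | (n+1) => (projProdAsc e n).comp (projPerp e (n+1))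

lemma projPerp_apply {H : Type*} [NormedAddCommGroup H] [InnerProductSpace ℂ H]
    [CompleteSpace H] (e : ℕ → H) (k : ℕ) (he : ‖e k‖ = 1) (y : H) :
    projPerp e k y = y - ⟪e k, y⟫ • e k := by
  show (Submodule.span ℂ {e k})ᗮ.starProjection y = _
  simp [Submodule.starProjection_orthogonal_val, Submodule.starProjection_singleton, he]

lemma projPerp_sa {H : Type*} [NormedAddCommGroup H] [InnerProductSpace ℂ H]
    [CompleteSpace H] (e : ℕ → H) (k : ℕ) : IsSelfAdjoint (projPerp e k) :=
  isSelfAdjoint_starProjection _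

lemma projProd_adjoint {H : Type*} [NormedAddCommGroup H] [InnerProductSpace ℂ H]
    [CompleteSpace H] (e : ℕ → H) (n : ℕ) :
    ContinuousLinearMap.adjoint (projProdAsc e n) = projProdDesc e n := by
  induction n with
  | zero => exact projPerp_sa e 0
  | succ n ih =>
    rw [projProdAsc, projProdDesc, ContinuousLinearMap.adjoint_comp, ih,
      (projPerp_sa e (n+1)).adjoint_eq]

theorem kaczmarz_S_projection_products
    {H : Type*} [NormedAddCommGroup H] [InnerProductSpace ℂ H] [CompleteSpace H]
    (e g : ℕ → H) (he : ∀ n, ‖e n‖ = 1)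
    (hg0 : g 0 = e 0)
    (hg : ∀ n, 0 < n → g n = e n - ∑ i ∈ Finset.range n, ⟪e i, e n⟫ • g i)
    (S : ℕ → H →L[ℂ] H)
    (hS : ∀ (n : ℕ) (y : H), S n y = ∑ j ∈ Finset.range (n + 1), ⟪e j, y⟫ • g j) :
    ∀ n : ℕ, 1 - ContinuousLinearMap.adjoint (S n) = projProdDesc e n ∧
      1 - S n = projProdAsc e n := by
  have asc : ∀ n, 1 - S n = projProdAsc e n := by
    intro n
    induction n with
    | zero =>
      ext y
      simp [hS, hg0, projProdAsc, projPerp_apply e 0 (he 0)]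
    | succ n ih =>
      have hgn : (1 - S n) (e (n+1)) = g (n+1) := by
        rw [hg (n+1) (Nat.succ_pos n)]
        simp [hS]
      ext y
      have h1 : projProdAsc e (n+1) y = (1 - S n) (y - ⟪e (n+1), y⟫ • e (n+1)) := by
        rw [projProdAsc, ContinuousLinearMap.comp_apply,
          projPerp_apply e (n+1) (he (n+1)), ih]
      rw [h1, map_sub, map_smul, hgn]
      simp only [ContinuousLinearMap.sub_apply, ContinuousLinearMap.one_apply,
        hS, Finset.sum_range_succ]
      abel
  intro n
  refine ⟨?_, asc n⟩
  rw [← projProd_adjoint, ← asc n, map_sub]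
  rw [ContinuousLinearMap.one_def, ContinuousLinearMap.adjoint_id]
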